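/- Let n ≥ 3 be an odd integer and p a prime. Let A_1, …, A_k ∈ SL_n(ℤ) and let w be an element of the free group F_{k+1} on generators x_0, x_1, …, x_k. For a ring R and elements g, B_1, …, B_k ∈ SL_n(R), write w(g, B_1, …, B_k) for the image of w under the homomorphism F_{k+1} → SL_n(R) sending x_0 ↦ g and x_i ↦ B_i for 1 ≤ i ≤ k. If the closed set C = {g ∈ SL_n(ℤ_p) : w(g, A_1, …, A_k) = 1} (where the A_i are viewed in SL_n(ℤ_p) via the ring map ℤ → ℤ_p) has nonempty interior in SL_n(ℤ_p), then w(B, A_1, …, A_k) = 1 for every B ∈ SL_n(ℂ) (where the A_i are viewed in SL_n(ℂ) via the ring map ℤ → ℂ). -/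

import Mathlib

open Matrix

/-- The topology on `SL_n(ℤ_p)` induced from the (product) topology on matrices over the
`p`-adic integers. -/
noncomputable instance specialLinearGroupPadicTopology (n : ℕ) (p : ℕ) [Fact p.Prime] :
    TopologicalSpace (SpecialLinearGroup (Fin n) ℤ_[p]) :=
  TopologicalSpace.induced (fun g => (g : Matrix (Fin n) (Fin n) ℤ_[p])) inferInstance

namespace SL9aux

open Matrix MvPolynomial Cardinal

/-! ### Transvections over a field: every `SL_n` element is a product of transvections -/

section Emb

variable {n : ℕ} {F : Type*} [Field F]

/-- The matrix with a 2×2 block `[[x,y],[z,w]]` at rows/columns `i,j` and identity elsewhere. -/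
def emb (i j : Fin n) (x y z w : F) : Matrix (Fin n) (Fin n) F :=
  Matrix.of fun k l =>
    if k = i then (if l = i then x else if l = j then y else 0)
    else if k = j then (if l = i then z else if l = j then w else 0)
    else if k = l then 1 else 0

variable {i j : Fin n}

lemma transvection_eq_emb (hij : i ≠ j) (a : F) : transvection i j a = emb i j 1 a 0 1 := by
  ext k l
  simp only [transvection, emb, Matrix.add_apply, Matrix.one_apply, Matrix.single,
    Matrix.of_apply]
  split_ifs <;> (try subst_vars) <;> (try tauto) <;> simp_all

lemma emb_mul_transvection_ij (hij : i ≠ j) (x y z w c : F) :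
    emb i j x y z w * transvection i j c = emb i j x (y + c * x) z (w + c * z) := by
  ext k l
  rcases eq_or_ne l j with hl | hl
  · rw [hl, mul_transvection_apply_same i j k c]
    rcases eq_or_ne k i with hk | hk
    · rw [hk]; simp [emb, hij, hij.symm]
    · rcases eq_or_ne k j with hk2 | hk2
      · rw [hk2]; simp [emb, hij, hij.symm]
      · simp [emb, hij, hij.symm, hk, hk2]
  · rw [mul_transvection_apply_of_ne i j k l hl]
    simp only [emb, Matrix.of_apply, if_neg hl]

lemma emb_mul_transvection_ji (hij : i ≠ j) (x y z w c : F) :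
    emb i j x y z w * transvection j i c = emb i j (x + c * y) y (z + c * w) w := by
  ext k l
  rcases eq_or_ne l i with hl | hl
  · rw [hl, mul_transvection_apply_same j i k c]
    rcases eq_or_ne k i with hk | hk
    · rw [hk]; simp [emb, hij, hij.symm]
    · rcases eq_or_ne k j with hk2 | hk2
      · rw [hk2]; simp [emb, hij, hij.symm]
      · simp [emb, hij, hij.symm, hk, hk2]
  · rw [mul_transvection_apply_of_ne j i k l hl]
    simp only [emb, Matrix.of_apply, if_neg hl]

lemma emb_eq_diagonal (hij : i ≠ j) (a b : F) :
    emb i j a 0 0 b = diagonal (fun k => if k = i then a else if k = j then b else 1) := by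
  ext k l
  simp only [emb, Matrix.of_apply, diagonal, Matrix.of_apply]
  split_ifs <;> (try subst_vars) <;> (try tauto) <;> simp_all

/-- A diagonal matrix `diag(…,a,…,a⁻¹,…)` is a product of transvections. -/
lemma exists_transvec_prod_eq_diag_pair (hij : i ≠ j) (a : F) (ha : a ≠ 0) :
    ∃ L : List (TransvectionStruct (Fin n) F),
      (L.map TransvectionStruct.toMatrix).prod =
        diagonal (fun k => if k = i then a else if k = j then a⁻¹ else 1) := by
  refine ⟨[⟨i, j, hij, a⟩, ⟨j, i, hij.symm, -a⁻¹⟩, ⟨i, j, hij, a - 1⟩, ⟨j, i, hij.symm, 1⟩,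
    ⟨i, j, hij, -1⟩], ?_⟩
  have h1 : (1 : F) + -a⁻¹ * a = 0 := by field_simp; ring
  have h2 : (0 : F) + -a⁻¹ * 1 = -a⁻¹ := by ring
  have h3 : a + (a - 1) * 0 = a := by ring
  have h4 : (1 : F) + (a - 1) * -a⁻¹ = a⁻¹ := by field_simp <;> ring
  have h5 : (0 : F) + 1 * a = a := by ring
  have h6 : -a⁻¹ + 1 * a⁻¹ = 0 := by ring
  have h7 : a + -1 * a = 0 := by ring
  have h8 : a⁻¹ + -1 * 0 = a⁻¹ := by ring
  have key : transvection i j a * transvection j i (-a⁻¹) * transvection i j (a - 1) *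
      transvection j i 1 * transvection i j (-1) =
      diagonal (fun k => if k = i then a else if k = j then a⁻¹ else 1) := by
    rw [transvection_eq_emb hij, emb_mul_transvection_ji hij, h1, h2,
      emb_mul_transvection_ij hij, h3, h4, emb_mul_transvection_ji hij, h5, h6,
      emb_mul_transvection_ij hij, h7, h8, emb_eq_diagonal hij]
  rw [← key]
  simp only [List.map_cons, List.map_nil, List.prod_cons, List.prod_nil,
    TransvectionStruct.toMatrix_mk, mul_one, Matrix.mul_assoc]

/-- A diagonal matrix of determinant one is a product of transvections. -/
lemma exists_transvec_prod_eq_diagonal (d : Fin n → F) (hd : ∀ k, d k ≠ 0)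
    (hprod : ∏ k, d k = 1) :
    ∃ L : List (TransvectionStruct (Fin n) F),
      (L.map TransvectionStruct.toMatrix).prod = diagonal d := by
  classical
  have main : ∀ s : Finset (Fin n), ∀ d : Fin n → F, (∀ k, d k ≠ 0) →
      (∀ k ∉ s, d k = 1) → ∏ k, d k = 1 →
      ∃ L : List (TransvectionStruct (Fin n) F),
        (L.map TransvectionStruct.toMatrix).prod = diagonal d := by
    intro s
    induction s using Finset.induction_on with
    | empty =>
      intro d _ h1 _
      refine ⟨[], ?_⟩
      have : d = fun _ => 1 := funext fun k => h1 k (Finset.notMem_empty k)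
      simp [this, diagonal_one]
    | @insert i s his IH =>
      intro d hd0 h1 hprod
      rcases s.eq_empty_or_nonempty with rfl | ⟨j, hj⟩
      · -- all entries off {i} are 1, so d i = 1 too
        have hoff : ∀ k, k ≠ i → d k = 1 := by
          intro k hk
          exact h1 k (by simp [hk])
        have hdi : d i = 1 := by
          have := hprod
          rwa [Fintype.prod_eq_single i hoff] at this
        have : d = fun _ => 1 := by
          funext k
          rcases eq_or_ne k i with rfl | hk
          · exact hdi
          · exact hoff k hk
        exact ⟨[], by simp [this, diagonal_one]⟩
      · have hij : i ≠ j := fun h => his (h ▸ hj)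
        set a := d i with ha
        set d' : Fin n → F :=
          Function.update (Function.update d i 1) j (a * d j) with hd'
        have hd'0 : ∀ k, d' k ≠ 0 := by
          intro k
          rcases eq_or_ne k j with rfl | hkj
          · have haa : a ≠ 0 := ha ▸ hd0 i
            simp [hd', Function.update_self]
            exact ⟨haa, hd0 k⟩
          · rcases eq_or_ne k i with rfl | hki
            · simp [hd', Function.update_of_ne hij, Function.update_self]
            · simp [hd', Function.update_of_ne hkj, Function.update_of_ne hki, hd0 k]
        have hfact : d = fun k =>
            (if k = i then a else if k = j then a⁻¹ else 1) * d' k := by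
          funext k
          rcases eq_or_ne k j with rfl | hkj
          · simp [hd', Function.update_self, hij.symm, ← mul_assoc, ha,
              inv_mul_cancel₀ (hd0 i)]
          · rcases eq_or_ne k i with rfl | hki
            · simp [hd', Function.update_of_ne hij, Function.update_self, ha]
            · simp [hd', Function.update_of_ne hkj, Function.update_of_ne hki, hki, hkj]
        have h1' : ∀ k, k ∉ s → d' k = 1 := by
          intro k hk
          have hkj : k ≠ j := fun h => hk (h ▸ hj)
          rcases eq_or_ne k i with rfl | hki
          · simp [hd', Function.update_of_ne hij, Function.update_self]
          · have : d k = 1 := h1 k (by simp [hki, hk])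
            simp [hd', Function.update_of_ne hkj, Function.update_of_ne hki, this]
        have hprod' : ∏ k, d' k = 1 := by
          have hu : ∏ k, (if k = i then a else if k = j then a⁻¹ else 1) = 1 := by
            have hfun : (fun k => if k = i then a else if k = j then a⁻¹ else 1) =
                Function.update (Function.update (fun _ => (1 : F)) j a⁻¹) i a := by
              funext k
              rcases eq_or_ne k i with rfl | hki
              · simp [Function.update_self]
              · rcases eq_or_ne k j with rfl | hkj
                · simp [Function.update_of_ne, hki, Function.update_self]
                · simp [Function.update_of_ne, hki, hkj]
            have haa : a ≠ 0 := ha ▸ hd0 i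
            rw [hfun, Finset.prod_update_of_mem (Finset.mem_univ i),
              Finset.prod_update_of_mem
                (by simp [hij.symm] : j ∈ Finset.univ \ {i})]
            simp only [Finset.prod_const_one, mul_one]
            exact mul_inv_cancel₀ haa
          have hh : (∏ k, ((if k = i then a else if k = j then a⁻¹ else 1) * d' k)) = 1 := by
            have := hfact ▸ hprod
            convert this using 2
          rw [Finset.prod_mul_distrib, hu, one_mul] at hh
          exact hh
        obtain ⟨L', hL'⟩ := IH d' hd'0 h1' hprod'
        obtain ⟨Lp, hLp⟩ := exists_transvec_prod_eq_diag_pair hij a (hd0 i)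
        refine ⟨Lp ++ L', ?_⟩
        rw [List.map_append, List.prod_append, hLp, hL', diagonal_mul_diagonal, hfact]
  exact main Finset.univ d hd (fun k hk => absurd (Finset.mem_univ k) hk) hprod

/-- Every matrix of determinant 1 over a field is a product of transvections. -/
lemma exists_transvec_prod_eq_of_det_eq_one (M : Matrix (Fin n) (Fin n) F)
    (hM : M.det = 1) :
    ∃ L : List (TransvectionStruct (Fin n) F),
      (L.map TransvectionStruct.toMatrix).prod = M := by
  obtain ⟨L, L', D, hLDL⟩ := Pivot.exists_list_transvec_mul_diagonal_mul_list_transvec M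
  have hdet : (diagonal D).det = 1 := by
    have h1 : ((L.map TransvectionStruct.toMatrix).prod).det = 1 :=
      TransvectionStruct.det_toMatrix_prod L
    have h2 : ((L'.map TransvectionStruct.toMatrix).prod).det = 1 :=
      TransvectionStruct.det_toMatrix_prod L'
    have := hM
    rw [hLDL] at this
    simp only [det_mul, h1, h2, one_mul, mul_one] at this
    exact this
  rw [det_diagonal] at hdet
  have hD0 : ∀ k, D k ≠ 0 := by
    intro k hk
    rw [Finset.prod_eq_zero (Finset.mem_univ k) hk] at hdet
    exact zero_ne_one hdet
  obtain ⟨P, hP⟩ := exists_transvec_prod_eq_diagonal D hD0 hdet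
  refine ⟨L ++ P ++ L', ?_⟩
  rw [List.map_append, List.map_append, List.prod_append, List.prod_append, hP, ← hLDL]

end Emb

/-! ### Transvections in the special linear group, and products indexed by patterns -/

section SLTransvec

variable {n : ℕ} {R : Type*} [CommRing R] {S : Type*} [CommRing S]

/-- Transvection as an element of the special linear group. -/
def tSL {i j : Fin n} (h : i ≠ j) (c : R) : SpecialLinearGroup (Fin n) R :=
  ⟨transvection i j c, det_transvection_of_ne i j h c⟩

@[simp] lemma tSL_coe {i j : Fin n} (h : i ≠ j) (c : R) :
    (tSL h c : Matrix (Fin n) (Fin n) R) = transvection i j c := rfl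

lemma map_tSL (f : R →+* S) {i j : Fin n} (h : i ≠ j) (c : R) :
    SpecialLinearGroup.map f (tSL h c) = tSL h (f c) := by
  apply Subtype.ext
  simp only [SpecialLinearGroup.map_apply_coe, RingHom.mapMatrix_apply, tSL_coe]
  ext a b
  simp only [RingHom.mapMatrix_apply, Matrix.map_apply, transvection, Matrix.add_apply,
    Matrix.one_apply, Matrix.single, Matrix.of_apply]
  split_ifs <;> simp

/-- Patterns of transvections: pairs of distinct indices. -/
abbrev Pat (n : ℕ) := {x : Fin n × Fin n // x.1 ≠ x.2}

/-- Product of transvections with positions given by `π` and coefficients by `c`. -/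
def prodT (π : List (Pat n)) (c : Fin π.length → R) : SpecialLinearGroup (Fin n) R :=
  ((List.finRange π.length).map (fun l => tSL (π.get l).2 (c l))).prod

lemma prodT_nil (c : Fin ([] : List (Pat n)).length → R) : prodT [] c = 1 := by
  simp [prodT]

lemma prodT_cons (x : Pat n) (π : List (Pat n)) (a : R) (c : Fin π.length → R) :
    prodT (x :: π) (Fin.cons a c) = tSL x.2 a * prodT π c := by
  have hfin : List.finRange (x :: π).length =
      (0 : Fin (π.length + 1)) :: (List.finRange π.length).map Fin.succ :=
    List.finRange_succ
  simp only [prodT]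
  rw [hfin, List.map_cons, List.map_map, List.prod_cons]
  rfl

lemma map_prodT (f : R →+* S) (π : List (Pat n)) (c : Fin π.length → R) :
    SpecialLinearGroup.map f (prodT π c) = prodT π (fun l => f (c l)) := by
  simp only [prodT]
  rw [map_list_prod, List.map_map]
  have : (⇑(SpecialLinearGroup.map f) ∘ fun l => tSL (π.get l).2 (c l)) =
      fun l => tSL (π.get l).2 (f (c l)) := by
    funext l
    simp only [Function.comp_apply, map_tSL]
  rw [this]

lemma SL_map_map (f : R →+* S) {T : Type*} [CommRing T] (g : S →+* T)
    (x : SpecialLinearGroup (Fin n) R) :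
    SpecialLinearGroup.map g (SpecialLinearGroup.map f x) =
      SpecialLinearGroup.map (g.comp f) x := by
  apply Subtype.ext
  simp only [SpecialLinearGroup.map_apply_coe, RingHom.mapMatrix_apply]
  ext a b
  simp

/-- Mapping a word evaluation along a ring homomorphism. -/
lemma map_lift (f : R →+* S) {m : ℕ} (g : Fin m → SpecialLinearGroup (Fin n) R)
    (w : FreeGroup (Fin m)) :
    SpecialLinearGroup.map f (FreeGroup.lift g w) =
      FreeGroup.lift (fun i => SpecialLinearGroup.map f (g i)) w := by
  have := FreeGroup.ext_hom ((SpecialLinearGroup.map f).comp (FreeGroup.lift g))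
    (FreeGroup.lift (fun i => SpecialLinearGroup.map f (g i))) (by intro a; simp)
  exact DFunLike.congr_fun this w

lemma comp_cons {α β : Type*} {m : ℕ} (F : α → β) (b : α) (g : Fin m → α) :
    (fun i : Fin (m + 1) => F ((Fin.cons b g : Fin (m + 1) → α) i)) =
      Fin.cons (F b) (fun i => F (g i)) := by
  funext i
  induction i using Fin.cases <;> simp

lemma exists_prodT_coe_eq {F : Type*} [Field F] (L : List (TransvectionStruct (Fin n) F)) :
    ∃ (π : List (Pat n)) (c : Fin π.length → F),
      ((prodT π c : SpecialLinearGroup (Fin n) F) : Matrix (Fin n) (Fin n) F) =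
        (L.map TransvectionStruct.toMatrix).prod := by
  induction L with
  | nil =>
    exact ⟨[], fun l => 0, by simp [prodT_nil]⟩
  | cons t L IH =>
    obtain ⟨π, c, hπ⟩ := IH
    refine ⟨⟨(t.i, t.j), t.hij⟩ :: π, Fin.cons t.c c, ?_⟩
    rw [prodT_cons, Matrix.SpecialLinearGroup.coe_mul, hπ, List.map_cons, List.prod_cons]
    congr 1

/-- Every element of `SL_n` over a field is `prodT π c` for some pattern and coefficients. -/
lemma exists_prodT_eq {F : Type*} [Field F] (B : SpecialLinearGroup (Fin n) F) :
    ∃ (π : List (Pat n)) (c : Fin π.length → F), prodT π c = B := by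
  obtain ⟨L, hL⟩ := exists_transvec_prod_eq_of_det_eq_one (B : Matrix (Fin n) (Fin n) F) B.2
  obtain ⟨π, c, hπ⟩ := exists_prodT_coe_eq L
  exact ⟨π, c, Subtype.ext (hπ.trans hL)⟩

end SLTransvec

/-! ### More `SpecialLinearGroup.map` plumbing -/

section MapPlumbing

variable {n : ℕ} {R : Type*} [CommRing R]

lemma SL_map_id (x : SpecialLinearGroup (Fin n) R) :
    SpecialLinearGroup.map (RingHom.id R) x = x := by
  apply Subtype.ext
  simp only [SpecialLinearGroup.map_apply_coe, RingHom.mapMatrix_apply]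
  ext a b
  simp

lemma coe_list_prod (L : List (SpecialLinearGroup (Fin n) R)) :
    ((L.prod : SpecialLinearGroup (Fin n) R) : Matrix (Fin n) (Fin n) R) =
      (L.map (fun g : SpecialLinearGroup (Fin n) R => (g : Matrix (Fin n) (Fin n) R))).prod := by
  induction L with
  | nil => simp
  | cons g L IH => simp [SpecialLinearGroup.coe_mul, IH]

lemma coe_prodT (π : List (Pat n)) (c : Fin π.length → R) :
    ((prodT π c : SpecialLinearGroup (Fin n) R) : Matrix (Fin n) (Fin n) R) =
      ((List.finRange π.length).map
        (fun l => transvection (π.get l).1.1 (π.get l).1.2 (c l))).prod := by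
  rw [prodT, coe_list_prod, List.map_map]
  congr 1

end MapPlumbing

/-! ### A ring embedding of the `p`-adic integers into the complex numbers -/

section Embedding

open Cardinal

lemma padic_card_le (p : ℕ) [Fact p.Prime] : #ℚ_[p] ≤ 𝔠 := by
  have h1 : #ℚ_[p] ≤ #(CauSeq ℚ (padicNorm p)) := mk_quotient_le
  have h2 : #(CauSeq ℚ (padicNorm p)) ≤ #(ℕ → ℚ) := mk_subtype_le _
  have h3 : #(ℕ → ℚ) = 𝔠 := by
    rw [← Cardinal.power_def, Cardinal.mkRat, Cardinal.mk_nat, Cardinal.aleph0_power_aleph0]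
  exact (h1.trans h2).trans h3.le

lemma padic_card (p : ℕ) [Fact p.Prime] : #ℚ_[p] = 𝔠 :=
  le_antisymm (padic_card_le p)
    (continuum_le_cardinal_of_nontriviallyNormedField ℚ_[p])

lemma nonempty_ringHom_padicInt_complex (p : ℕ) [Fact p.Prime] :
    Nonempty (ℤ_[p] →+* ℂ) := by
  let K := AlgebraicClosure ℚ_[p]
  have hinj : Function.Injective (algebraMap ℚ_[p] K) := (algebraMap ℚ_[p] K).injective
  haveI : CharZero K := charZero_of_injective_algebraMap hinj
  have hKle : #K ≤ 𝔠 := by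
    refine le_trans (Algebra.IsAlgebraic.cardinalMk_le_max ℚ_[p] K) ?_
    rw [padic_card p]
    exact max_le le_rfl aleph0_le_continuum
  have hKge : 𝔠 ≤ #K := by
    rw [← padic_card p]
    exact mk_le_of_injective hinj
  have hK : #K = 𝔠 := le_antisymm hKle hKge
  obtain ⟨e⟩ := IsAlgClosed.ringEquiv_of_equiv_of_charZero (K := K) (L := ℂ)
    (by rw [hK]; exact aleph0_lt_continuum)
    (Cardinal.eq.mp (by rw [hK, mk_complex]))
  exact ⟨(e.toRingHom.comp (algebraMap ℚ_[p] K)).comp (PadicInt.Coe.ringHom)⟩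

end Embedding

/-! ### The topological step -/

section Topology

variable {n : ℕ} (p : ℕ) [Fact p.Prime]

lemma continuous_entrywise {N : ℕ} (i j : Fin n) (l : Fin N) :
    Continuous fun t : Fin N → ℤ_[p] => transvection i j (t l) := by
  apply continuous_matrix
  intro a b
  simp only [transvection, Matrix.add_apply, Matrix.one_apply, Matrix.single, Matrix.of_apply]
  refine Continuous.add continuous_const ?_
  by_cases hab : i = a ∧ j = b
  · simp only [if_pos hab]
    exact continuous_apply l
  · simp only [if_neg hab]
    exact continuous_const

lemma continuous_prod_transvections {N : ℕ} (π : List (Pat n)) (hN : N = π.length)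
    (J : List (Fin π.length)) :
    Continuous fun t : Fin π.length → ℤ_[p] =>
      (J.map (fun l => transvection (π.get l).1.1 (π.get l).1.2 (t l))).prod := by
  induction J with
  | nil => simpa using continuous_const
  | cons l J IH =>
    simp only [List.map_cons, List.prod_cons]
    exact Continuous.matrix_mul (continuous_entrywise p _ _ l) IH

/-- The scaling step: a whole scaled polydisc of transvection-products lands in `U`. -/
lemma exists_scale {U : Set (SpecialLinearGroup (Fin n) ℤ_[p])} (hU : IsOpen U)
    (g₀ : SpecialLinearGroup (Fin n) ℤ_[p]) (hg₀ : g₀ ∈ U) (π : List (Pat n)) :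
    ∃ m : ℕ, ∀ t : Fin π.length → ℤ_[p],
      prodT π (fun l => (p : ℤ_[p]) ^ m * t l) * g₀ ∈ U := by
  obtain ⟨V, hV, hUV⟩ := isOpen_induced_iff.mp hU
  set G : (Fin π.length → ℤ_[p]) → Matrix (Fin n) (Fin n) ℤ_[p] :=
    fun t => ((prodT π t * g₀ : SpecialLinearGroup (Fin n) ℤ_[p]) :
      Matrix (Fin n) (Fin n) ℤ_[p]) with hG
  have hGeq : G = fun t =>
      (((List.finRange π.length).map
        (fun l => transvection (π.get l).1.1 (π.get l).1.2 (t l))).prod) *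
        (g₀ : Matrix (Fin n) (Fin n) ℤ_[p]) := by
    funext t
    show ((prodT π t * g₀ : SpecialLinearGroup (Fin n) ℤ_[p]) : Matrix (Fin n) (Fin n) ℤ_[p]) = _
    rw [Matrix.SpecialLinearGroup.coe_mul, coe_prodT]
  have hGcont : Continuous G := by
    rw [hGeq]
    exact Continuous.matrix_mul (continuous_prod_transvections p π rfl _) continuous_const
  have hG0 : G 0 = (g₀ : Matrix (Fin n) (Fin n) ℤ_[p]) := by
    show ((prodT π (0 : Fin π.length → ℤ_[p]) * g₀ : SpecialLinearGroup (Fin n) ℤ_[p]) :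
      Matrix (Fin n) (Fin n) ℤ_[p]) = (g₀ : Matrix (Fin n) (Fin n) ℤ_[p])
    have : prodT π (0 : Fin π.length → ℤ_[p]) = 1 := by
      apply Subtype.ext
      rw [coe_prodT]
      have : ((List.finRange π.length).map
          (fun l => transvection (π.get l).1.1 (π.get l).1.2 ((0 : Fin π.length → ℤ_[p]) l)))
          = (List.finRange π.length).map (fun _ => (1 : Matrix (Fin n) (Fin n) ℤ_[p])) := by
        apply List.map_congr_left
        intro l _
        simp [transvection_zero]
      rw [this, List.prod_eq_one, Matrix.SpecialLinearGroup.coe_one]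
      intro x hx
      simp only [List.mem_map] at hx
      obtain ⟨-, -, rfl⟩ := hx
      rfl
    rw [this, one_mul]
  have h0mem : (0 : Fin π.length → ℤ_[p]) ∈ G ⁻¹' V := by
    have : (g₀ : Matrix (Fin n) (Fin n) ℤ_[p]) ∈ V := by
      rw [← hUV] at hg₀
      exact hg₀
    simpa [Set.mem_preimage, hG0] using this
  obtain ⟨ε, hε, hball⟩ := Metric.isOpen_iff.mp (hV.preimage hGcont) 0 h0mem
  have hp1 : (1 : ℝ) / p < 1 := by
    rw [div_lt_one]
    · exact_mod_cast (Fact.out : p.Prime).one_lt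
    · exact_mod_cast (Fact.out : p.Prime).pos
  obtain ⟨m, hm⟩ := exists_pow_lt_of_lt_one hε hp1
  refine ⟨m, fun t => ?_⟩
  have hmem : (fun l => (p : ℤ_[p]) ^ m * t l) ∈ Metric.ball (0 : Fin π.length → ℤ_[p]) ε := by
    rw [Metric.mem_ball, dist_pi_lt_iff hε]
    intro l
    have : dist ((p : ℤ_[p]) ^ m * t l) ((0 : Fin π.length → ℤ_[p]) l) =
        ‖(p : ℤ_[p]) ^ m * t l‖ := by
      simp [dist_eq_norm]
    rw [this]
    have h1 : ‖(p : ℤ_[p]) ^ m * t l‖ ≤ ‖(p : ℤ_[p]) ^ m‖ := by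
      rw [norm_mul]
      exact mul_le_of_le_one_right (norm_nonneg _) (PadicInt.norm_le_one _)
    have h2 : ‖(p : ℤ_[p]) ^ m‖ = ((1 : ℝ) / p) ^ m := by
      rw [PadicInt.norm_p_pow]
      rw [_root_.zpow_neg, zpow_natCast, one_div, inv_pow]
    exact lt_of_le_of_lt (h1.trans h2.le) hm
  have := hball hmem
  rw [Set.mem_preimage] at this
  rw [← hUV]
  exact this

end Topology


end SL9aux

/-- Let `n ≥ 3` be odd, `p` a prime, `A_1, …, A_k ∈ SL_n(ℤ)` and
`w ∈ F_{k+1}` a word.  If the closed set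
`C = {g ∈ SL_n(ℤ_p) : w(g, A_1, …, A_k) = 1}` has nonempty interior in `SL_n(ℤ_p)`, then
`w(B, A_1, …, A_k) = 1` for every `B ∈ SL_n(ℂ)`.  (Words are evaluated via the universal
property of the free group, with the first generator sent to `g` resp. `B`, and the `A_i`
transported along the canonical ring maps `ℤ → ℤ_p` and `ℤ → ℂ`.) -/
theorem word_trivial_on_SL_complex_of_interior_nonempty
    (n : ℕ) (hn : 3 ≤ n) (hodd : Odd n) (p : ℕ) [Fact p.Prime]
    (k : ℕ) (A : Fin k → SpecialLinearGroup (Fin n) ℤ)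
    (w : FreeGroup (Fin (k + 1)))
    (hC : (interior {g : SpecialLinearGroup (Fin n) ℤ_[p] |
        FreeGroup.lift (Fin.cons g fun i =>
          SpecialLinearGroup.map (Int.castRingHom ℤ_[p]) (A i)) w = 1}).Nonempty) :
    ∀ B : SpecialLinearGroup (Fin n) ℂ,
      FreeGroup.lift (Fin.cons B fun i =>
        SpecialLinearGroup.map (Int.castRingHom ℂ) (A i)) w = 1 := by
  classical
  intro B
  obtain ⟨ι⟩ := SL9aux.nonempty_ringHom_padicInt_complex p
  set Ap : Fin k → SpecialLinearGroup (Fin n) ℤ_[p] :=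
    fun i => SpecialLinearGroup.map (Int.castRingHom ℤ_[p]) (A i) with hAp
  set S : Set (SpecialLinearGroup (Fin n) ℤ_[p]) :=
    {g | FreeGroup.lift (Fin.cons g Ap) w = 1} with hS
  obtain ⟨g₀, hg₀⟩ := hC
  obtain ⟨π, c, hπ⟩ := SL9aux.exists_prodT_eq (B * (SpecialLinearGroup.map ι g₀)⁻¹)
  obtain ⟨m, hm⟩ := SL9aux.exists_scale p isOpen_interior g₀ hg₀ π
  set R := MvPolynomial (Fin π.length) ℤ_[p] with hR
  set CC : ℤ_[p] →+* R := MvPolynomial.C with hCC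
  set Uel : SpecialLinearGroup (Fin n) R :=
    SL9aux.prodT π (fun l => CC ((p : ℤ_[p]) ^ m) * MvPolynomial.X l) *
      SpecialLinearGroup.map CC g₀ with hUel
  set AR : Fin k → SpecialLinearGroup (Fin n) R :=
    fun i => SpecialLinearGroup.map (CC.comp (Int.castRingHom ℤ_[p])) (A i) with hAR
  set W : SpecialLinearGroup (Fin n) R := FreeGroup.lift (Fin.cons Uel AR) w with hW
  -- A uniform description of the image of `W` under any ring homomorphism out of `R`.
  have eval_W : ∀ {T : Type} [CommRing T], ∀ (f : R →+* T) (c' : Fin π.length → T)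
      (g' : SpecialLinearGroup (Fin n) T) (A' : Fin k → SpecialLinearGroup (Fin n) T),
      (∀ l, f (CC ((p : ℤ_[p]) ^ m) * MvPolynomial.X l) = c' l) →
      (SpecialLinearGroup.map (f.comp CC) g₀ = g') →
      (∀ i, SpecialLinearGroup.map ((f.comp CC).comp (Int.castRingHom ℤ_[p])) (A i) = A' i) →
      SpecialLinearGroup.map f W =
        FreeGroup.lift (Fin.cons (SL9aux.prodT π c' * g') A') w := by
    intro T _ f c' g' A' h1 h2 h3
    have hfun : (fun i : Fin (k + 1) => SpecialLinearGroup.map f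
        ((Fin.cons Uel AR : Fin (k + 1) → SpecialLinearGroup (Fin n) R) i)) =
        Fin.cons (SL9aux.prodT π c' * g') A' := by
      funext i
      induction i using Fin.cases with
      | zero =>
        simp only [Fin.cons_zero]
        rw [hUel, _root_.map_mul, SL9aux.map_prodT, SL9aux.SL_map_map]
        rw [h2]
        exact congrArg (fun z => z * g') (congrArg (SL9aux.prodT π) (funext h1))
      | succ i =>
        simp only [Fin.cons_succ]
        rw [hAR, SL9aux.SL_map_map, ← RingHom.comp_assoc]
        exact h3 i
    rw [hW, SL9aux.map_lift]
    exact congrArg (fun gg : Fin (k + 1) → SpecialLinearGroup (Fin n) T =>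
      FreeGroup.lift gg w) hfun
  -- Step A: the universal word element is trivial.
  have hW1 : W = 1 := by
    apply Matrix.SpecialLinearGroup.ext
    intro a b
    apply MvPolynomial.funext
    intro x
    have h1 : SpecialLinearGroup.map (MvPolynomial.eval x) W = 1 := by
      rw [eval_W (MvPolynomial.eval x) (fun l => (p : ℤ_[p]) ^ m * x l) g₀ Ap ?_ ?_ ?_]
      · have hmem : SL9aux.prodT π (fun l => (p : ℤ_[p]) ^ m * x l) * g₀ ∈ S :=
          interior_subset (hm x)
        exact hmem
      · intro l
        rw [hCC, _root_.map_mul, MvPolynomial.eval_C, MvPolynomial.eval_X]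
      · have hid : (MvPolynomial.eval x).comp CC = RingHom.id ℤ_[p] := by
          ext r
          simp [hCC]
        rw [hid, SL9aux.SL_map_id]
      · intro i
        have hid : ((MvPolynomial.eval x).comp CC).comp (Int.castRingHom ℤ_[p]) =
            Int.castRingHom ℤ_[p] := Subsingleton.elim _ _
        rw [hid, hAp]
    have h2 : MvPolynomial.eval x (W a b) = (1 : Matrix (Fin n) (Fin n) ℤ_[p]) a b := by
      have h3 := congrArg
        (fun g : SpecialLinearGroup (Fin n) ℤ_[p] => (g : Matrix (Fin n) (Fin n) ℤ_[p]) a b) h1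
      simpa [SpecialLinearGroup.map_apply_coe, RingHom.mapMatrix_apply,
        Matrix.map_apply, SpecialLinearGroup.coe_one] using h3
    rw [h2]
    have h4 : ((1 : SpecialLinearGroup (Fin n) R) : Matrix (Fin n) (Fin n) R) a b =
        (1 : Matrix (Fin n) (Fin n) R) a b := by rw [Matrix.SpecialLinearGroup.coe_one]
    show _ = MvPolynomial.eval x ((1 : SpecialLinearGroup (Fin n) R) a b)
    rw [show ((1 : SpecialLinearGroup (Fin n) R) a b : R) =
      (1 : Matrix (Fin n) (Fin n) R) a b from h4]
    rw [Matrix.one_apply, Matrix.one_apply, apply_ite (MvPolynomial.eval x)]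
    simp
  -- Step B: push the identity to the complex numbers.
  have hp0 : ((p : ℂ)) ^ m ≠ 0 :=
    pow_ne_zero _ (Nat.cast_ne_zero.mpr (Fact.out : p.Prime).ne_zero)
  set Φ : R →+* ℂ := MvPolynomial.eval₂Hom ι (fun l => c l / (p : ℂ) ^ m) with hΦ
  have hfin : SpecialLinearGroup.map Φ W =
      FreeGroup.lift (Fin.cons (SL9aux.prodT π c * SpecialLinearGroup.map ι g₀)
        (fun i => SpecialLinearGroup.map (Int.castRingHom ℂ) (A i))) w := by
    refine eval_W Φ c (SpecialLinearGroup.map ι g₀)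
      (fun i => SpecialLinearGroup.map (Int.castRingHom ℂ) (A i)) ?_ ?_ ?_
    · intro l
      rw [hΦ, hCC]
      rw [_root_.map_mul, MvPolynomial.eval₂Hom_C, MvPolynomial.eval₂Hom_X']
      rw [_root_.map_pow, map_natCast, mul_comm]
      exact div_mul_cancel₀ _ hp0
    · have hcomp : Φ.comp CC = ι := by
        ext r
        rw [RingHom.comp_apply, hΦ, hCC, MvPolynomial.eval₂Hom_C]
      rw [hcomp]
    · intro i
      have hid : (Φ.comp CC).comp (Int.castRingHom ℤ_[p]) = Int.castRingHom ℂ :=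
        Subsingleton.elim _ _
      rw [hid]
  rw [hW1, _root_.map_one] at hfin
  rw [hπ, inv_mul_cancel_right] at hfin
  exact hfin.symm
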